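/- Let ĥ₁, ĥ₂ : (0,∞) → (0,∞) be continuous and strictly increasing with ĥᵢ(w) → 0 as w → 0⁺ and ĥᵢ(w) → ∞ as w → ∞, and let n > 0 be constant. Then for every (h₁,h₂) ∈ ℝ² \ {0} there exists a unique w* > 0 such that |h₁/ĥ₁(w*)|ⁿ + |h₂/ĥ₂(w*)|ⁿ = 1. -/

import Mathlib

open Set Filter

theorem stmt2 (h1 h2 : ℝ → ℝ) (n : ℝ) (hn : 0 < n)
    (hpos : ∀ w ∈ Set.Ioi (0:ℝ), h1 w ∈ Set.Ioi (0:ℝ) ∧ h2 w ∈ Set.Ioi (0:ℝ))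
    (hc1 : ContinuousOn h1 (Set.Ioi 0)) (hc2 : ContinuousOn h2 (Set.Ioi 0))
    (hm1 : StrictMonoOn h1 (Set.Ioi 0)) (hm2 : StrictMonoOn h2 (Set.Ioi 0))
    (h10 : Tendsto h1 (nhdsWithin 0 (Set.Ioi 0)) (nhds 0))
    (h20 : Tendsto h2 (nhdsWithin 0 (Set.Ioi 0)) (nhds 0))
    (h1top : Tendsto h1 atTop atTop) (h2top : Tendsto h2 atTop atTop)
    (x : ℝ × ℝ) (hx : x ≠ 0) :
    ∃! w : ℝ, 0 < w ∧ |x.1 / h1 w| ^ n + |x.2 / h2 w| ^ n = 1 := by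
  set F : ℝ → ℝ := fun w => |x.1 / h1 w| ^ n + |x.2 / h2 w| ^ n with hF
  have hxor : x.1 ≠ 0 ∨ x.2 ≠ 0 := by
    by_contra h; push_neg at h; exact hx (Prod.ext h.1 h.2)
  have key : ∀ w ∈ Ioi (0:ℝ), F w = (|x.1| / h1 w) ^ n + (|x.2| / h2 w) ^ n := by
    intro w hw
    have p1 := (hpos w hw).1
    have p2 := (hpos w hw).2
    simp only [hF, abs_div, abs_of_pos (mem_Ioi.mp p1), abs_of_pos (mem_Ioi.mp p2)]
  -- strict antitonicity on Ioi 0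
  have hanti : StrictAntiOn F (Ioi 0) := by
    intro w1 hw1 w2 hw2 hlt
    rw [key w1 hw1, key w2 hw2]
    have p11 := (hpos w1 hw1).1
    have p12 := (hpos w1 hw1).2
    have p21 := (hpos w2 hw2).1
    have p22 := (hpos w2 hw2).2
    have hlt1 : h1 w1 < h1 w2 := hm1 hw1 hw2 hlt
    have hlt2 : h2 w1 < h2 w2 := hm2 hw1 hw2 hlt
    have le1 : (|x.1| / h1 w2) ^ n ≤ (|x.1| / h1 w1) ^ n := by
      apply Real.rpow_le_rpow (div_nonneg (abs_nonneg _) p21.le) _ hn.le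
      exact div_le_div_of_nonneg_left (abs_nonneg _) p11 hlt1.le
    have le2 : (|x.2| / h2 w2) ^ n ≤ (|x.2| / h2 w1) ^ n := by
      apply Real.rpow_le_rpow (div_nonneg (abs_nonneg _) p22.le) _ hn.le
      exact div_le_div_of_nonneg_left (abs_nonneg _) p12 hlt2.le
    rcases hxor with hx1 | hx2
    · have lt1 : (|x.1| / h1 w2) ^ n < (|x.1| / h1 w1) ^ n := by
        apply Real.rpow_lt_rpow (div_nonneg (abs_nonneg _) p21.le) _ hn
        exact div_lt_div_of_pos_left (abs_pos.mpr hx1) p11 hlt1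
      exact add_lt_add_of_lt_of_le lt1 le2
    · have lt2 : (|x.2| / h2 w2) ^ n < (|x.2| / h2 w1) ^ n := by
        apply Real.rpow_lt_rpow (div_nonneg (abs_nonneg _) p22.le) _ hn
        exact div_lt_div_of_pos_left (abs_pos.mpr hx2) p12 hlt2
      exact add_lt_add_of_le_of_lt le1 lt2
  -- a small point where F > 1
  have hsmall : ∃ w₀ ∈ Ioi (0:ℝ), 1 < F w₀ := by
    have main : ∀ (g : ℝ → ℝ), (∀ w ∈ Ioi (0:ℝ), g w ∈ Ioi (0:ℝ)) →
        Tendsto g (nhdsWithin 0 (Ioi 0)) (nhds 0) →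
        ∀ (c : ℝ), c ≠ 0 → ∃ w₀ ∈ Ioi (0:ℝ), 1 < (|c| / g w₀) ^ n := by
      intro g hgp hg0 c hc
      have hca : 0 < |c| := abs_pos.mpr hc
      have hev : ∀ᶠ w in nhdsWithin 0 (Ioi 0), g w < |c| :=
        hg0.eventually (gt_mem_nhds hca)
      have hmem : ∀ᶠ w in nhdsWithin (0:ℝ) (Ioi 0), w ∈ Ioi (0:ℝ) :=
        eventually_mem_nhdsWithin
      obtain ⟨w₀, hlt, hw₀⟩ := (hev.and hmem).exists
      refine ⟨w₀, hw₀, ?_⟩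
      have hgpos := hgp w₀ hw₀
      have : 1 < |c| / g w₀ := (one_lt_div hgpos).mpr hlt
      exact Real.one_lt_rpow_iff_of_pos (lt_trans one_pos this) |>.mpr (Or.inl ⟨this, hn⟩)
    rcases hxor with hx1 | hx2
    · obtain ⟨w₀, hw₀, hgt⟩ := main h1 (fun w hw => (hpos w hw).1) h10 x.1 hx1
      refine ⟨w₀, hw₀, ?_⟩
      rw [key w₀ hw₀]
      have : (0:ℝ) ≤ (|x.2| / h2 w₀) ^ n :=
        Real.rpow_nonneg (div_nonneg (abs_nonneg _) (hpos w₀ hw₀).2.le) n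
      linarith
    · obtain ⟨w₀, hw₀, hgt⟩ := main h2 (fun w hw => (hpos w hw).2) h20 x.2 hx2
      refine ⟨w₀, hw₀, ?_⟩
      rw [key w₀ hw₀]
      have : (0:ℝ) ≤ (|x.1| / h1 w₀) ^ n :=
        Real.rpow_nonneg (div_nonneg (abs_nonneg _) (hpos w₀ hw₀).1.le) n
      linarith
  obtain ⟨w₀, hw₀, hFw₀⟩ := hsmall
  -- F tends to 0 at top
  have hFtop : Tendsto F atTop (nhds 0) := by
    have t1 : Tendsto (fun w => |x.1 / h1 w| ^ n) atTop (nhds 0) := by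
      have d1 : Tendsto (fun w => x.1 / h1 w) atTop (nhds 0) :=
        Tendsto.div_atTop tendsto_const_nhds h1top
      have a1 : Tendsto (fun w => |x.1 / h1 w|) atTop (nhds 0) := by
        simpa using d1.abs
      have := (Real.continuousAt_rpow_const 0 n (Or.inr hn.le)).tendsto.comp a1
      simpa [Real.zero_rpow hn.ne', Function.comp_def] using this
    have t2 : Tendsto (fun w => |x.2 / h2 w| ^ n) atTop (nhds 0) := by
      have d2 : Tendsto (fun w => x.2 / h2 w) atTop (nhds 0) :=
        Tendsto.div_atTop tendsto_const_nhds h2top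
      have a2 : Tendsto (fun w => |x.2 / h2 w|) atTop (nhds 0) := by
        simpa using d2.abs
      have := (Real.continuousAt_rpow_const 0 n (Or.inr hn.le)).tendsto.comp a2
      simpa [Real.zero_rpow hn.ne', Function.comp_def] using this
    simpa using t1.add t2
  have hbig : ∃ w₁, w₀ < w₁ ∧ F w₁ < 1 := by
    have hev : ∀ᶠ w in atTop, F w < 1 := hFtop.eventually (gt_mem_nhds one_pos)
    obtain ⟨w₁, hlt, hgt⟩ := (hev.and (eventually_gt_atTop w₀)).exists
    exact ⟨w₁, hgt, hlt⟩
  obtain ⟨w₁, hw01, hFw₁⟩ := hbig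
  have hw₁ : w₁ ∈ Ioi (0:ℝ) := lt_trans hw₀ hw01
  -- continuity of F on [w₀, w₁]
  have hsub : Icc w₀ w₁ ⊆ Ioi (0:ℝ) := fun y hy => lt_of_lt_of_le hw₀ hy.1
  have hcont : ContinuousOn F (Icc w₀ w₁) := by
    have hne1 : ∀ y ∈ Icc w₀ w₁, h1 y ≠ 0 := fun y hy => (hpos y (hsub hy)).1.ne'
    have hne2 : ∀ y ∈ Icc w₀ w₁, h2 y ≠ 0 := fun y hy => (hpos y (hsub hy)).2.ne'
    exact (((continuousOn_const.div (hc1.mono hsub) hne1).abs).rpow_const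
        (fun y _ => Or.inr hn.le)).add
      (((continuousOn_const.div (hc2.mono hsub) hne2).abs).rpow_const
        (fun y _ => Or.inr hn.le))
  have h1mem : (1:ℝ) ∈ Icc (F w₁) (F w₀) := ⟨hFw₁.le, hFw₀.le⟩
  obtain ⟨w, hwmem, hFw⟩ := intermediate_value_Icc' hw01.le hcont h1mem
  have hwIoi : w ∈ Ioi (0:ℝ) := hsub hwmem
  refine ⟨w, ⟨hwIoi, hFw⟩, ?_⟩
  intro y ⟨hy, hFy⟩
  exact hanti.injOn hy hwIoi (hFy.trans hFw.symm)
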